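/- Bound on I_γ: under the Peierls estimate H_{γ̄}(ω) ≥ |γ̄₁|δ^d + ρ₀|γ̄| for all configurations achieving γ, the contour integral I_γ = ∫ e^{-βH_{γ̄}(ω)} 1{∀i∈γ̄, σ(ω,i)=σ_i} Π^z_{γ̂}(dω) satisfies I_γ ≤ g₀^{|γ̄₀|} g₁^{|γ̄₁|} e^{-βρ₀|γ̄|}, where g₀ = e^{-zδ^d} and g₁ = e^{-βδ^d}(1 - e^{-zδ^d}). -/

import Mathlib

open MeasureTheory Real

noncomputable section

/-- Bound on the contour integral `I_γ`: if the Peierls estimate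
`H_{γ̄}(ω) ≥ |γ̄₁| δ^d + ρ₀ |γ̄|` holds for all configurations achieving the contour
(i.e. realizing the prescribed spin pattern, which under `Π^z` has probability
`(e^{-zδ^d})^{|γ̄₀|} (1-e^{-zδ^d})^{|γ̄₁|}`), then
`I_γ = ∫ 1_{pattern} e^{-β H_{γ̄}} dΠ^z ≤ g₀^{|γ̄₀|} g₁^{|γ̄₁|} e^{-βρ₀|γ̄|}`,
where `g₀ = e^{-zδ^d}` and `g₁ = e^{-βδ^d}(1-e^{-zδ^d})`. -/
theorem contour_integral_bound
    {Ω : Type*} [MeasurableSpace Ω] (P : Measure Ω)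
    (Hγ : Ω → ℝ) (pattern : Set Ω) (hmeas : MeasurableSet pattern)
    (d : ℕ) (z β δ ρ₀ : ℝ) (hz : 0 < z) (hβ : 0 ≤ β) (hδ : 0 < δ) (hρ₀ : 0 < ρ₀)
    (n₀ n₁ : ℕ)
    (hPeierls : ∀ ω ∈ pattern, Hγ ω ≥ (n₁ : ℝ) * δ ^ d + ρ₀ * (n₀ + n₁ : ℕ))
    (hP : P pattern =
      ENNReal.ofReal ((exp (-z * δ ^ d)) ^ n₀ * (1 - exp (-z * δ ^ d)) ^ n₁)) :
    ∫ ω in pattern, exp (-β * Hγ ω) ∂P ≤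
      (exp (-z * δ ^ d)) ^ n₀ * (exp (-β * δ ^ d) * (1 - exp (-z * δ ^ d))) ^ n₁ *
        exp (-β * ρ₀ * (n₀ + n₁ : ℕ)) := by

  set g := exp (-z * δ ^ d) with hg
  set C := exp (-β * ((n₁ : ℝ) * δ ^ d + ρ₀ * (n₀ + n₁ : ℕ))) with hC
  have hg1 : 0 ≤ 1 - g := by
    have : g ≤ 1 := exp_le_one_iff.mpr (by nlinarith [pow_pos hδ d])
    linarith
  have hCpos : 0 < C := exp_pos _
  have hfin : P pattern < ⊤ := by rw [hP]; exact ENNReal.ofReal_lt_top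
  have hbound : ∀ ω ∈ pattern, ‖exp (-β * Hγ ω)‖ ≤ C := by
    intro ω hω
    rw [norm_of_nonneg (exp_pos _).le]
    apply exp_le_exp.mpr
    have := hPeierls ω hω
    nlinarith
  have key : ‖∫ ω in pattern, exp (-β * Hγ ω) ∂P‖ ≤ C * (P pattern).toReal :=
    norm_setIntegral_le_of_norm_le_const_ae' hfin
      (Filter.Eventually.of_forall hbound)
  have htr : (P pattern).toReal = g ^ n₀ * (1 - g) ^ n₁ := by
    rw [hP, ENNReal.toReal_ofReal (by positivity)]
  calc ∫ ω in pattern, exp (-β * Hγ ω) ∂P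
      ≤ C * (P pattern).toReal := (le_abs_self _).trans key
    _ = g ^ n₀ * (exp (-β * δ ^ d) * (1 - g)) ^ n₁ * exp (-β * ρ₀ * (n₀ + n₁ : ℕ)) := by
        rw [htr, hC, mul_pow, ← exp_nat_mul, mul_add, exp_add, ← exp_nat_mul]
        ring_nf


end
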